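/- Let κ, χ be nonzero real numbers and Λ, Γ complex numbers with Re Λ ≠ 0, Re(Λ+Γ) ≠ 0, and Λ ≠ Γ. Fix ε ∈ ℝ and μ ∈ ℝ. Then (a₁,a₂) ∈ ℂ² solves the system (εκ + iχμ)a₁ + (Λ|a₁|² + Γ|a₂|²)a₁ = 0, (εκ + iχμ)a₂ + (Λ|a₂|² + Γ|a₁|²)a₂ = 0 if and only if one of the following holds: (i) a₁ = a₂ = 0; (ii) exactly one of a₁, a₂ is zero and the nonzero one has modulus r with Λr² = -(εκ + iχμ); (iii) |a₁| = |a₂| = r with (Λ+Γ)r² = -(εκ + iχμ). -/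

import Mathlib

/-- Complete characterization of solutions of the truncated cubic
`O(2)` Hopf system in `(a₁, a₂) ∈ ℂ²`. -/
theorem stmt6 (κ χ : ℝ) (hκ : κ ≠ 0) (hχ : χ ≠ 0) (Λ Γ : ℂ)
    (hΛ : Λ.re ≠ 0) (hΛΓ : (Λ + Γ).re ≠ 0) (hne : Λ ≠ Γ) (ε μ : ℝ) (a₁ a₂ : ℂ) :
    (((ε * κ : ℂ) + Complex.I * (χ * μ : ℂ)) * a₁ +
        (Λ * (‖a₁‖ : ℂ) ^ 2 + Γ * (‖a₂‖ : ℂ) ^ 2) * a₁ = 0 ∧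
     ((ε * κ : ℂ) + Complex.I * (χ * μ : ℂ)) * a₂ +
        (Λ * (‖a₂‖ : ℂ) ^ 2 + Γ * (‖a₁‖ : ℂ) ^ 2) * a₂ = 0)
    ↔ ((a₁ = 0 ∧ a₂ = 0) ∨
       (a₁ = 0 ∧ a₂ ≠ 0 ∧
         Λ * (‖a₂‖ : ℂ) ^ 2 = -((ε * κ : ℂ) + Complex.I * (χ * μ : ℂ))) ∨
       (a₂ = 0 ∧ a₁ ≠ 0 ∧
         Λ * (‖a₁‖ : ℂ) ^ 2 = -((ε * κ : ℂ) + Complex.I * (χ * μ : ℂ))) ∨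
       (‖a₁‖ = ‖a₂‖ ∧
         (Λ + Γ) * (‖a₁‖ : ℂ) ^ 2 = -((ε * κ : ℂ) + Complex.I * (χ * μ : ℂ)))) := by
  set c : ℂ := (ε * κ : ℂ) + Complex.I * (χ * μ : ℂ) with hc
  set x : ℂ := (‖a₁‖ : ℂ) ^ 2 with hx
  set y : ℂ := (‖a₂‖ : ℂ) ^ 2 with hy
  constructor
  · rintro ⟨h1, h2⟩
    have h1' : (c + (Λ * x + Γ * y)) * a₁ = 0 := by linear_combination h1
    have h2' : (c + (Λ * y + Γ * x)) * a₂ = 0 := by linear_combination h2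
    by_cases ha1 : a₁ = 0
    · by_cases ha2 : a₂ = 0
      · exact Or.inl ⟨ha1, ha2⟩
      · have e2 : c + (Λ * y + Γ * x) = 0 := by
          rcases mul_eq_zero.mp h2' with h | h
          · exact h
          · exact absurd h ha2
        have hx0 : x = 0 := by simp [hx, ha1]
        refine Or.inr (Or.inl ⟨ha1, ha2, ?_⟩)
        rw [hx0] at e2
        linear_combination e2
    · by_cases ha2 : a₂ = 0
      · have e1 : c + (Λ * x + Γ * y) = 0 := by
          rcases mul_eq_zero.mp h1' with h | h
          · exact h
          · exact absurd h ha1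
        have hy0 : y = 0 := by simp [hy, ha2]
        refine Or.inr (Or.inr (Or.inl ⟨ha2, ha1, ?_⟩))
        rw [hy0] at e1
        linear_combination e1
      · have e1 : c + (Λ * x + Γ * y) = 0 := by
          rcases mul_eq_zero.mp h1' with h | h
          · exact h
          · exact absurd h ha1
        have e2 : c + (Λ * y + Γ * x) = 0 := by
          rcases mul_eq_zero.mp h2' with h | h
          · exact h
          · exact absurd h ha2
        have hsub : (Λ - Γ) * (x - y) = 0 := by linear_combination e1 - e2
        have hxy : x = y := by
          rcases mul_eq_zero.mp hsub with h | h
          · exact absurd (sub_eq_zero.mp h) hne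
          · exact sub_eq_zero.mp h
        refine Or.inr (Or.inr (Or.inr ⟨?_, ?_⟩))
        · have : (‖a₁‖ : ℝ) ^ 2 = (‖a₂‖ : ℝ) ^ 2 := by
            have := hxy
            rw [hx, hy] at this
            exact_mod_cast this
          nlinarith [norm_nonneg a₁, norm_nonneg a₂]
        · rw [hxy] at e1 ⊢
          linear_combination e1
  · rintro (⟨h1, h2⟩ | ⟨h1, h2, h3⟩ | ⟨h1, h2, h3⟩ | ⟨h1, h2⟩)
    · subst h1; subst h2; simp
    · subst h1
      have hx0 : x = 0 := by simp [hx]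
      rw [hx0]
      constructor
      · ring
      · linear_combination a₂ * h3
    · subst h1
      have hy0 : y = 0 := by simp [hy]
      rw [hy0]
      constructor
      · linear_combination a₁ * h3
      · ring
    · have hyx : y = x := by rw [hx, hy, h1]
      rw [hyx]
      constructor
      · linear_combination a₁ * h2
      · linear_combination a₂ * h2
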